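/- Let q and n be coprime positive integers, let I ⊆ {1,...,m}, and let g = gcd(n, gcd(s_i : i ∈ I)) (with the inner gcd equal to 0 when I = ∅). For c ∈ Z/nZ, let A_c be the set of functions f : Z/nZ → {0,1,...,q−1} such that (f takes the value q−1 on all of S_i if and only if i ∉ I) and ∑_{z ∈ Z/nZ} z·f(z) = c. Then |A_c| = (g/n) · ∏_{i ∈ I} (q^{ℓ_i} − 1) whenever c lies in the subgroup of Z/nZ generated by g, and |A_c| = 0 otherwise. -/

import Mathlib

open scoped Classical

namespace ACcardAux

theorem pi_single_sum {ι : Type*} [Fintype ι] [DecidableEq ι] {G : ι → Type*}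
    [∀ i, AddCommMonoid (G i)] {H : Type*} [AddCommMonoid H]
    (ψ : ∀ i, G i →+ H) (i0 : ι) (v : G i0) :
    ∑ i, ψ i (Pi.single i0 v i) = ψ i0 v := by
  rw [Fintype.sum_eq_single i0 (fun j hj => by rw [Pi.single_eq_of_ne hj, map_zero])]
  rw [Pi.single_eq_same]

theorem geom (q : ℕ) (hq : 1 ≤ q) (l : ℕ) :
    (q - 1) * ∑ j ∈ Finset.range l, q ^ j = q ^ l - 1 := by
  induction l with
  | zero => simp
  | succ l ih =>
    rw [Finset.sum_range_succ, Nat.mul_add, ih]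
    have h1 : 1 ≤ q ^ l := Nat.one_le_pow _ _ hq
    have h2 : (q - 1) * q ^ l = q * q ^ l - 1 * q ^ l := Nat.sub_mul q 1 _
    have h3 : q ^ (l + 1) = q * q ^ l := by rw [pow_succ]; ring
    have h4 : q ^ l ≤ q * q ^ l := Nat.le_mul_of_pos_left _ hq
    omega

theorem sum_digits_le (q : ℕ) (hq : 1 ≤ q) (l : ℕ) (a : ℕ → ℕ) (ha : ∀ j < l, a j < q) :
    ∑ j ∈ Finset.range l, a j * q ^ j ≤ q ^ l - 1 := by
  calc ∑ j ∈ Finset.range l, a j * q ^ j ≤ ∑ j ∈ Finset.range l, (q - 1) * q ^ j :=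
        Finset.sum_le_sum (fun j hj => Nat.mul_le_mul_right _
          (by have := ha j (Finset.mem_range.1 hj); omega))
    _ = q ^ l - 1 := by rw [← Finset.mul_sum, geom q hq]

theorem sum_digits_all (q l : ℕ) (hq : 1 ≤ q) (a : ℕ → ℕ) (ha : ∀ j < l, a j = q - 1) :
    ∑ j ∈ Finset.range l, a j * q ^ j = q ^ l - 1 := by
  rw [← geom q hq l, Finset.mul_sum]
  exact Finset.sum_congr rfl (fun j hj => by rw [ha j (Finset.mem_range.1 hj)])

theorem sum_digits_lt (q : ℕ) (hq : 1 ≤ q) (l : ℕ) (a : ℕ → ℕ) (ha : ∀ j < l, a j < q)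
    (j0 : ℕ) (hj0 : j0 < l) (hne : a j0 ≠ q - 1) :
    ∑ j ∈ Finset.range l, a j * q ^ j < q ^ l - 1 := by
  have h : ∑ j ∈ Finset.range l, a j * q ^ j < ∑ j ∈ Finset.range l, (q - 1) * q ^ j := by
    refine Finset.sum_lt_sum (fun j hj => Nat.mul_le_mul_right _
      (by have := ha j (Finset.mem_range.1 hj); omega)) ⟨j0, Finset.mem_range.2 hj0, ?_⟩
    have h1 := ha j0 hj0
    have h2 : 0 < q ^ j0 := Nat.pow_pos hq
    have : a j0 < q - 1 := by omega
    exact (Nat.mul_lt_mul_right h2).mpr this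
  rwa [← Finset.mul_sum, geom q hq] at h

theorem digits_inj (q : ℕ) (hq : 1 ≤ q) :
    ∀ l (a b : ℕ → ℕ), (∀ j < l, a j < q) → (∀ j < l, b j < q) →
      (∑ j ∈ Finset.range l, a j * q ^ j = ∑ j ∈ Finset.range l, b j * q ^ j) →
      ∀ j < l, a j = b j := by
  intro l
  induction l with
  | zero => intro a b _ _ _ j hj; omega
  | succ l ih =>
    intro a b ha hb hsum j hj
    rw [Finset.sum_range_succ', Finset.sum_range_succ'] at hsum
    have hrw : ∀ (c : ℕ → ℕ), (∑ j ∈ Finset.range l, c (j + 1) * q ^ (j + 1)) + c 0 * q ^ 0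
        = (∑ j ∈ Finset.range l, c (j + 1) * q ^ j) * q + c 0 := by
      intro c
      rw [Finset.sum_mul, pow_zero, mul_one]
      congr 1
      exact Finset.sum_congr rfl (fun j _ => by rw [pow_succ]; ring)
    rw [hrw a, hrw b] at hsum
    have ha0 : a 0 < q := ha 0 (by omega)
    have hb0 : b 0 < q := hb 0 (by omega)
    have h0 : a 0 = b 0 := by
      have hm := congrArg (· % q) hsum
      simpa [Nat.mul_add_mod', Nat.mod_eq_of_lt ha0, Nat.mod_eq_of_lt hb0] using hm
    have htail : ∑ j ∈ Finset.range l, a (j + 1) * q ^ j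
        = ∑ j ∈ Finset.range l, b (j + 1) * q ^ j := by
      have h5 : (∑ j ∈ Finset.range l, a (j + 1) * q ^ j) * q
          = (∑ j ∈ Finset.range l, b (j + 1) * q ^ j) * q := by omega
      exact Nat.eq_of_mul_eq_mul_right hq h5
    rcases Nat.eq_zero_or_pos j with h | h
    · rw [h]; exact h0
    · obtain ⟨k, rfl⟩ : ∃ k, j = k + 1 := ⟨j - 1, by omega⟩
      exact ih (fun j => a (j + 1)) (fun j => b (j + 1))
        (fun j hj => ha (j + 1) (by omega)) (fun j hj => hb (j + 1) (by omega)) htail k (by omega)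

theorem sum_digits (q : ℕ) (hq : 1 ≤ q) :
    ∀ l (V : ℕ), V < q ^ l → ∑ j ∈ Finset.range l, (V / q ^ j % q) * q ^ j = V := by
  intro l
  induction l with
  | zero => intro V hV; simp at hV ⊢; omega
  | succ l ih =>
    intro V hV
    rw [Finset.sum_range_succ']
    have h1 : ∀ j, V / q ^ (j + 1) = (V / q) / q ^ j := by
      intro j; rw [pow_succ', Nat.div_div_eq_div_mul]
    have h2 : ∑ j ∈ Finset.range l, (V / q ^ (j + 1) % q) * q ^ (j + 1)
        = (∑ j ∈ Finset.range l, ((V / q) / q ^ j % q) * q ^ j) * q := by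
      rw [Finset.sum_mul]
      exact Finset.sum_congr rfl (fun j _ => by rw [h1 j, pow_succ]; ring)
    have h3 : V / q < q ^ l := by
      rw [Nat.div_lt_iff_lt_mul (by omega)]
      calc V < q ^ (l + 1) := hV
        _ = q ^ l * q := pow_succ q l
    rw [h2, ih (V / q) h3]
    simp only [pow_zero, Nat.div_one, mul_one]
    exact Nat.div_add_mod' V q

theorem pow_mod_cycle {R : Type*} [CommRing R] (u x : R) (L : ℕ) (hL : 0 < L)
    (h : u ^ L * x = x) : ∀ j, u ^ j * x = u ^ (j % L) * x := by
  intro j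
  induction j using Nat.strong_induction_on with
  | _ j ih =>
    by_cases hj : j < L
    · rw [Nat.mod_eq_of_lt hj]
    · push_neg at hj
      have h2 : u ^ j * x = u ^ (j - L) * x := by
        conv_lhs => rw [show j = (j - L) + L by omega]
        rw [pow_add, mul_assoc, h]
      rw [h2, ih (j - L) (by omega), Nat.mod_eq_sub_mod hj]

theorem gcd_cast_mem2 {n : ℕ} (H : AddSubgroup (ZMod n)) (a b : ℕ)
    (ha : (a : ZMod n) ∈ H) (hb : (b : ZMod n) ∈ H) : ((Nat.gcd a b : ℕ) : ZMod n) ∈ H := by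
  have h2 : ((Nat.gcd a b : ℕ) : ZMod n)
      = (Nat.gcdA a b : ZMod n) * (a : ZMod n) + (Nat.gcdB a b : ZMod n) * (b : ZMod n) := by
    have h := congrArg (fun z : ℤ => (z : ZMod n)) (Nat.gcd_eq_gcd_ab a b)
    push_cast at h
    rw [h]; ring
  rw [h2]
  exact H.add_mem
    (by simpa [zsmul_eq_mul] using H.zsmul_mem ha (Nat.gcdA a b))
    (by simpa [zsmul_eq_mul] using H.zsmul_mem hb (Nat.gcdB a b))

theorem gcd_cast_mem {n : ℕ} (H : AddSubgroup (ZMod n)) {α : Type*} (J : Finset α) (s : α → ℕ)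
    (h : ∀ i ∈ J, ((s i : ZMod n)) ∈ H) : ((J.gcd s : ℕ) : ZMod n) ∈ H := by
  classical
  induction J using Finset.induction with
  | empty => simpa using H.zero_mem
  | insert a s hni ih =>
    rw [Finset.gcd_insert]
    exact gcd_cast_mem2 H _ _ (h _ (Finset.mem_insert_self _ _))
      (ih (fun i hi => h i (Finset.mem_insert_of_mem hi)))

end ACcardAux

open scoped Classical


/-- For coprime positive integers `q` and `n`, `I ⊆ {1,…,m}`, `g = gcd(n, gcd(s_i : i ∈ I))`
and `c ∈ ZMod n`, the number of functions `f : ZMod n → {0,…,q-1}` taking the value `q-1`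
on all of `S_i` exactly for `i ∉ I` and with `∑ z, z·f(z) = c` is
`(g/n)·∏_{i ∈ I}(q^{ℓ_i}-1)` if `c` lies in the subgroup of `ZMod n` generated by `g`,
and `0` otherwise. Here `S_i = {q^j·s_i : j ∈ ℕ}` are the cyclotomic cosets (orbits of
`z ↦ q·z` on `ZMod n`), with representatives `s i` and sizes `ℓ i` (the least positive
integer with `q^{ℓ i}·s_i ≡ s_i (mod n)`). -/
theorem A_c_card
    (q n : ℕ) (hq : 0 < q) (hn : 0 < n) [NeZero n] (hqn : Nat.Coprime q n)
    (m : ℕ) (s : Fin m → ℕ) (ℓ : Fin m → ℕ)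
    (hS : ∀ z : ZMod n, ∃! i : Fin m, ∃ j : ℕ, z = (q : ZMod n) ^ j * (s i : ZMod n))
    (hl : ∀ i, IsLeast {l : ℕ | 0 < l ∧ (q : ZMod n) ^ l * (s i : ZMod n) = (s i : ZMod n)} (ℓ i))
    (I : Finset (Fin m)) (c : ZMod n) :
    (Nat.card {f : ZMod n → Fin q //
        (∀ i, ((∀ z : ZMod n,
            (∃ j : ℕ, z = (q : ZMod n) ^ j * (s i : ZMod n)) → (f z : ℕ) = q - 1)
          ↔ i ∉ I)) ∧
        ∑ z : ZMod n, z * ((f z : ℕ) : ZMod n) = c} : ℚ) =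
      if c ∈ AddSubgroup.zmultiples ((Nat.gcd n (I.gcd s) : ZMod n)) then
        (Nat.gcd n (I.gcd s) : ℚ) / (n : ℚ) * ∏ i ∈ I, ((q : ℚ) ^ (ℓ i) - 1)
      else 0 := by

  classical
  by_cases hq2 : 2 ≤ q
  swap
  · -- q = 1 case
    have hq1 : q = 1 := by omega
    subst hq1
    have hf0 : ∀ (f : ZMod n → Fin 1) (z : ZMod n), (f z : ℕ) = 1 - 1 := by
      intro f z
      have := (f z).isLt
      omega
    have hsum0 : ∀ f : ZMod n → Fin 1, ∑ z : ZMod n, z * ((f z : ℕ) : ZMod n) = 0 := by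
      intro f
      apply Finset.sum_eq_zero
      intro z _
      have h1 : (f z : ℕ) = 0 := by have := (f z).isLt; omega
      rw [h1]
      simp
    rcases Finset.eq_empty_or_nonempty I with hI | hI
    · subst hI
      have hmem : ∀ d : ZMod n,
          (d ∈ AddSubgroup.zmultiples ((Nat.gcd n ((∅ : Finset (Fin m)).gcd s) : ZMod n)))
            ↔ d = 0 := by
        intro d
        rw [AddSubgroup.mem_zmultiples_iff]
        constructor
        · rintro ⟨k, rfl⟩
          simp [Finset.gcd_empty, Nat.gcd_zero_right, ZMod.natCast_self]
        · rintro rfl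
          exact ⟨0, by simp⟩
      by_cases hc : c = 0
      · subst hc
        rw [if_pos ((hmem 0).mpr rfl)]
        simp only [Finset.gcd_empty, Nat.gcd_zero_right, Finset.prod_empty, mul_one]
        rw [div_self (show (n:ℚ) ≠ 0 from Nat.cast_ne_zero.mpr hn.ne'), Nat.cast_eq_one]
        rw [Nat.card_eq_one_iff_unique]
        constructor
        · constructor
          rintro ⟨f, _⟩ ⟨f', _⟩
          apply Subtype.ext
          funext z
          exact Subsingleton.elim _ _
        · exact ⟨⟨fun _ => ⟨0, Nat.one_pos⟩,
            fun i => iff_of_true (fun z _ => hf0 (fun _ => ⟨0, Nat.one_pos⟩) z) (Finset.notMem_empty i),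
            hsum0 _⟩⟩
      · rw [if_neg (fun h => hc ((hmem c).mp h))]
        rw [Nat.cast_eq_zero, Nat.card_eq_zero]
        exact Or.inl ⟨fun p => hc (p.2.2.symm.trans (hsum0 p.1))⟩
    · obtain ⟨i0, hi0⟩ := hI
      rw [Finset.prod_eq_zero hi0 (by norm_num), mul_zero, ite_self]
      rw [Nat.cast_eq_zero, Nat.card_eq_zero]
      refine Or.inl ⟨fun p => ?_⟩
      exact (p.2.1 i0).mp (fun z _ => hf0 p.1 z) hi0
  -- main case
  have hq1 : 1 ≤ q := by omega
  have hℓpos : ∀ i, 0 < ℓ i := fun i => (hl i).1.1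
  have hpow : ∀ i, (q : ZMod n) ^ ℓ i * (s i : ZMod n) = (s i : ZMod n) := fun i => (hl i).1.2
  have hqu : IsUnit ((q : ℕ) : ZMod n) := ⟨ZMod.unitOfCoprime q hqn, rfl⟩
  set M : Fin m → ℕ := fun i => q ^ ℓ i - 1 with hMdef
  have hqpow : ∀ i, 2 ≤ q ^ ℓ i := fun i =>
    le_trans hq2 (Nat.le_self_pow (hℓpos i).ne' q)
  have hMpos : ∀ i, 0 < M i := fun i => by have := hqpow i; simp only [hMdef]; omega
  haveI hMne : ∀ i, NeZero (M i) := fun i => ⟨(hMpos i).ne'⟩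
  set E : (Σ i : Fin m, Fin (ℓ i)) → ZMod n :=
    fun p => (q : ZMod n) ^ (p.2 : ℕ) * (s p.1 : ZMod n) with hEdef
  have hEinj : Function.Injective E := by
    rintro ⟨i, j⟩ ⟨i', j'⟩ hpe
    simp only [hEdef] at hpe
    have hi : i = i' :=
      (hS ((q : ZMod n) ^ (j : ℕ) * (s i : ZMod n))).unique ⟨(j : ℕ), rfl⟩ ⟨(j' : ℕ), hpe⟩
    subst hi
    have key : ∀ a b : Fin (ℓ i),
        (q : ZMod n) ^ (a : ℕ) * (s i : ZMod n) = (q : ZMod n) ^ (b : ℕ) * (s i : ZMod n) →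
        (a : ℕ) ≤ (b : ℕ) → (a : ℕ) = (b : ℕ) := by
      intro a b hab hle
      by_contra hne
      have h1 : (q : ZMod n) ^ (a : ℕ) * ((q : ZMod n) ^ ((b : ℕ) - (a : ℕ)) * (s i : ZMod n))
          = (q : ZMod n) ^ (a : ℕ) * (s i : ZMod n) := by
        rw [← mul_assoc, ← pow_add, show (a : ℕ) + ((b : ℕ) - (a : ℕ)) = (b : ℕ) by omega]
        exact hab.symm
      have h2 : (q : ZMod n) ^ ((b : ℕ) - (a : ℕ)) * (s i : ZMod n) = (s i : ZMod n) :=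
        (hqu.pow _).mul_left_cancel h1
      have h3 := (hl i).2 ⟨by omega, h2⟩
      have := b.isLt
      omega
    have hjj : (j : ℕ) = (j' : ℕ) := by
      rcases le_total (j : ℕ) (j' : ℕ) with h | h
      · exact key j j' hpe h
      · exact (key j' j hpe.symm h).symm
    exact congrArg (fun t : Fin (ℓ i) => (⟨i, t⟩ : Σ i', Fin (ℓ i'))) (Fin.ext hjj)
  have hEsurj : Function.Surjective E := by
    intro z
    obtain ⟨i, ⟨j, hz⟩, -⟩ := hS z
    refine ⟨⟨i, ⟨j % ℓ i, Nat.mod_lt _ (hℓpos i)⟩⟩, ?_⟩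
    simp only [hEdef]
    rw [← ACcardAux.pow_mod_cycle _ _ _ (hℓpos i) (hpow i) j]
    exact hz.symm
  have hMcast : ∀ i, ((M i : ℕ) : ZMod n) * (s i : ZMod n) = 0 := by
    intro i
    have h2 : 1 ≤ q ^ ℓ i := Nat.one_le_pow _ _ hq1
    have h1 : ((M i : ℕ) : ZMod n) = (q : ZMod n) ^ ℓ i - 1 := by
      simp only [hMdef]
      rw [Nat.cast_sub h2]
      push_cast
      ring
    rw [h1, sub_mul, one_mul, hpow i, sub_self]
  set ψ : ∀ i : Fin m, ZMod (M i) →+ ZMod n := fun i =>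
    ZMod.lift (M i) ⟨(AddMonoidHom.mulRight ((s i : ℕ) : ZMod n)).comp (Int.castAddHom (ZMod n)), by
      simp only [AddMonoidHom.coe_comp, Function.comp_apply, Int.coe_castAddHom,
        AddMonoidHom.mulRight_apply]
      push_cast
      exact hMcast i⟩ with hψdef
  have hψspec : ∀ (i : Fin m) (N : ℕ),
      ψ i ((N : ZMod (M i))) = ((N : ℕ) : ZMod n) * (s i : ZMod n) := by
    intro i N
    have h := ZMod.lift_coe (M i)
      (⟨(AddMonoidHom.mulRight ((s i : ℕ) : ZMod n)).comp (Int.castAddHom (ZMod n)), by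
        simp only [AddMonoidHom.coe_comp, Function.comp_apply, Int.coe_castAddHom,
          AddMonoidHom.mulRight_apply]
        push_cast
        exact hMcast i⟩) (N : ℤ)
    simp only [AddMonoidHom.coe_comp, Function.comp_apply, Int.coe_castAddHom,
      AddMonoidHom.mulRight_apply] at h
    push_cast at h
    simpa only [hψdef] using h
  set φ : (∀ i : {x // x ∈ I}, ZMod (M i.1)) →+ ZMod n :=
    { toFun := fun x => ∑ i : {x // x ∈ I}, ψ i.1 (x i),
      map_zero' := by simp,
      map_add' := fun x y => by
        simp only [Pi.add_apply, map_add]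
        rw [Finset.sum_add_distrib] } with hφdef
  set Nf : (ZMod n → Fin q) → Fin m → ℕ := fun f i =>
    ∑ j ∈ Finset.range (ℓ i), (f ((q : ZMod n) ^ j * (s i : ZMod n)) : ℕ) * q ^ j with hNfdef
  set Φf : (ZMod n → Fin q) → (∀ i : {x // x ∈ I}, ZMod (M i.1)) :=
    fun f i => ((Nf f i.1 : ZMod (M i.1))) with hΦdef
  have hsigma : ∀ f : ZMod n → Fin q,
      (∀ i, ((∀ z : ZMod n,
          (∃ j : ℕ, z = (q : ZMod n) ^ j * (s i : ZMod n)) → (f z : ℕ) = q - 1) ↔ i ∉ I)) →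
      ∑ z : ZMod n, z * ((f z : ℕ) : ZMod n) = φ (Φf f) := by
    intro f hf
    have h1 : ∑ z : ZMod n, z * ((f z : ℕ) : ZMod n)
        = ∑ p : (Σ i : Fin m, Fin (ℓ i)), E p * ((f (E p) : ℕ) : ZMod n) :=
      (Fintype.sum_bijective E ⟨hEinj, hEsurj⟩ _ _ (fun p => rfl)).symm
    have h2 : ∀ i : Fin m, ∑ j : Fin (ℓ i), E ⟨i, j⟩ * ((f (E ⟨i, j⟩) : ℕ) : ZMod n)
        = ((Nf f i : ℕ) : ZMod n) * (s i : ZMod n) := by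
      intro i
      have hcast : ((Nf f i : ℕ) : ZMod n)
          = ∑ j ∈ Finset.range (ℓ i),
            ((f ((q : ZMod n) ^ j * (s i : ZMod n)) : ℕ) : ZMod n) * (q : ZMod n) ^ j := by
        simp only [hNfdef]
        push_cast
        rfl
      simp only [hEdef]
      rw [Fin.sum_univ_eq_sum_range
        (fun j => (q : ZMod n) ^ j * (s i : ZMod n)
          * ((f ((q : ZMod n) ^ j * (s i : ZMod n)) : ℕ) : ZMod n))]
      rw [hcast, Finset.sum_mul]
      exact Finset.sum_congr rfl (fun j _ => by ring)
    have h3 : ∀ i ∉ I, ((Nf f i : ℕ) : ZMod n) * (s i : ZMod n) = 0 := by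
      intro i hi
      have hall := (hf i).mpr hi
      have hNM : Nf f i = M i := by
        simp only [hNfdef, hMdef]
        exact ACcardAux.sum_digits_all q (ℓ i) hq1 _ (fun j hj => hall _ ⟨j, rfl⟩)
      rw [hNM, hMcast i]
    calc ∑ z : ZMod n, z * ((f z : ℕ) : ZMod n)
        = ∑ p : (Σ i : Fin m, Fin (ℓ i)), E p * ((f (E p) : ℕ) : ZMod n) := h1
      _ = ∑ i : Fin m, ∑ j : Fin (ℓ i), E ⟨i, j⟩ * ((f (E ⟨i, j⟩) : ℕ) : ZMod n) := by
          rw [← Finset.univ_sigma_univ, Finset.sum_sigma]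
      _ = ∑ i : Fin m, ((Nf f i : ℕ) : ZMod n) * (s i : ZMod n) :=
          Finset.sum_congr rfl (fun i _ => h2 i)
      _ = ∑ i ∈ I, ((Nf f i : ℕ) : ZMod n) * (s i : ZMod n) := by
          rw [← Finset.sum_filter_add_sum_filter_not Finset.univ (· ∈ I)]
          have hz : ∑ i ∈ Finset.univ.filter (fun i => ¬ i ∈ I),
              ((Nf f i : ℕ) : ZMod n) * (s i : ZMod n) = 0 :=
            Finset.sum_eq_zero (fun i hi => h3 i (Finset.mem_filter.mp hi).2)
          rw [hz, add_zero, Finset.filter_univ_mem]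
      _ = ∑ i : {x // x ∈ I}, ψ i.1 (Φf f i) := by
          rw [← Finset.sum_coe_sort I (fun i => ((Nf f i : ℕ) : ZMod n) * (s i : ZMod n))]
          exact Finset.sum_congr rfl (fun i _ => by
            simp only [hΦdef]
            rw [hψspec i.1 (Nf f i.1)])
      _ = φ (Φf f) := rfl
  have hlt : ∀ (f : ZMod n → Fin q) (i : Fin m), i ∈ I →
      (∀ i, ((∀ z : ZMod n,
          (∃ j : ℕ, z = (q : ZMod n) ^ j * (s i : ZMod n)) → (f z : ℕ) = q - 1) ↔ i ∉ I)) →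
      Nf f i < M i := by
    intro f i hi hf
    have hnot : ¬ (∀ z : ZMod n,
        (∃ j : ℕ, z = (q : ZMod n) ^ j * (s i : ZMod n)) → (f z : ℕ) = q - 1) :=
      fun h => (hf i).mp h hi
    push_neg at hnot
    obtain ⟨z, ⟨j, hz⟩, hne⟩ := hnot
    have hz' : z = (q : ZMod n) ^ (j % ℓ i) * (s i : ZMod n) := by
      rw [hz]; exact ACcardAux.pow_mod_cycle _ _ _ (hℓpos i) (hpow i) j
    simp only [hNfdef, hMdef]
    exact ACcardAux.sum_digits_lt q hq1 (ℓ i) _ (fun j' hj' => (f _).isLt)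
      (j % ℓ i) (Nat.mod_lt _ (hℓpos i)) (by rw [← hz']; exact hne)
  have hcard1 : Nat.card {f : ZMod n → Fin q //
        (∀ i, ((∀ z : ZMod n,
            (∃ j : ℕ, z = (q : ZMod n) ^ j * (s i : ZMod n)) → (f z : ℕ) = q - 1)
          ↔ i ∉ I)) ∧
        ∑ z : ZMod n, z * ((f z : ℕ) : ZMod n) = c}
      = Nat.card {x : (∀ i : {x // x ∈ I}, ZMod (M i.1)) // φ x = c} := by
    apply Nat.card_eq_of_bijective
      (fun f => ⟨Φf f.1, by rw [← hsigma f.1 f.2.1]; exact f.2.2⟩)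
    constructor
    · rintro ⟨f, hf, hfc⟩ ⟨f', hf', hfc'⟩ hff
      have hx : Φf f = Φf f' := congrArg Subtype.val hff
      apply Subtype.ext
      funext z
      obtain ⟨⟨i, j⟩, rfl⟩ := hEsurj z
      by_cases hi : i ∈ I
      · have h2 := congrFun hx ⟨i, hi⟩
        simp only [hΦdef] at h2
        have hfl := hlt f i hi hf
        have hfl' := hlt f' i hi hf'
        have h2v := congrArg ZMod.val h2
        rw [ZMod.val_cast_of_lt hfl, ZMod.val_cast_of_lt hfl'] at h2v
        simp only [hNfdef] at h2v
        have hdig := ACcardAux.digits_inj q hq1 (ℓ i)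
          (fun j' => (f ((q : ZMod n) ^ j' * (s i : ZMod n)) : ℕ))
          (fun j' => (f' ((q : ZMod n) ^ j' * (s i : ZMod n)) : ℕ))
          (fun j' _ => (f _).isLt) (fun j' _ => (f' _).isLt) h2v (j : ℕ) j.isLt
        exact Fin.ext (by simpa only [hEdef] using hdig)
      · have e1 := (hf i).mpr hi (E ⟨i, j⟩) ⟨(j : ℕ), rfl⟩
        have e2 := (hf' i).mpr hi (E ⟨i, j⟩) ⟨(j : ℕ), rfl⟩
        exact Fin.ext (by rw [e1, e2])
    · rintro ⟨x, hx⟩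
      set E' := Equiv.ofBijective E ⟨hEinj, hEsurj⟩ with hE'def
      set F : (Σ i : Fin m, Fin (ℓ i)) → ℕ := fun p =>
        if h : p.1 ∈ I then (x ⟨p.1, h⟩).val / q ^ (p.2 : ℕ) % q else q - 1 with hFdef
      have hFlt : ∀ p, F p < q := by
        intro p
        simp only [hFdef]
        split
        · exact Nat.mod_lt _ (by omega)
        · omega
      set f : ZMod n → Fin q := fun z => ⟨F (E'.symm z), hFlt _⟩ with hfdef
      have hfE : ∀ p, (f (E p) : ℕ) = F p := by
        intro p
        simp only [hfdef]
        rw [show E p = E' p from rfl, E'.symm_apply_apply]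
      have hV : ∀ (i) (hi : i ∈ I), (x ⟨i, hi⟩).val < M i := fun i hi => ZMod.val_lt _
      have hVq : ∀ (i) (hi : i ∈ I), (x ⟨i, hi⟩).val < q ^ ℓ i := by
        intro i hi
        have h4 := hV i hi
        have h5 := hqpow i
        simp only [hMdef] at h4
        omega
      have hfdig : ∀ (i) (hi : i ∈ I) (j) (hj : j < ℓ i),
          (f ((q : ZMod n) ^ j * (s i : ZMod n)) : ℕ) = (x ⟨i, hi⟩).val / q ^ j % q := by
        intro i hi j hj
        have h6 := hfE ⟨i, ⟨j, hj⟩⟩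
        have h7 : F ⟨i, ⟨j, hj⟩⟩ = (x ⟨i, hi⟩).val / q ^ j % q := by
          simp only [hFdef]
          exact dif_pos hi
        have h8 : ((q : ZMod n) ^ j * (s i : ZMod n)) = E ⟨i, ⟨j, hj⟩⟩ := by
          simp only [hEdef]
        rw [h8, h6, h7]
      have hNfx : ∀ (i) (hi : i ∈ I), Nf f i = (x ⟨i, hi⟩).val := by
        intro i hi
        simp only [hNfdef]
        have hsc : ∀ j ∈ Finset.range (ℓ i),
            (f ((q : ZMod n) ^ j * (s i : ZMod n)) : ℕ) * q ^ j
              = ((x ⟨i, hi⟩).val / q ^ j % q) * q ^ j := fun j hj => by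
          rw [hfdig i hi j (Finset.mem_range.1 hj)]
        rw [Finset.sum_congr rfl hsc]
        exact ACcardAux.sum_digits q hq1 (ℓ i) _ (hVq i hi)
      have hiff : ∀ i, ((∀ z : ZMod n,
          (∃ j : ℕ, z = (q : ZMod n) ^ j * (s i : ZMod n)) → (f z : ℕ) = q - 1) ↔ i ∉ I) := by
        intro i
        constructor
        · intro hall
          by_contra hii
          have hIi : i ∈ I := hii
          have hNM : Nf f i = M i := by
            simp only [hNfdef, hMdef]
            exact ACcardAux.sum_digits_all q (ℓ i) hq1 _ (fun j hj => hall _ ⟨j, rfl⟩)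
          have h7 := hV i hIi
          have h8 := hNfx i hIi
          omega
        · intro hi z hz
          obtain ⟨j, rfl⟩ := hz
          have hz' : (q : ZMod n) ^ j * (s i : ZMod n)
              = E ⟨i, ⟨j % ℓ i, Nat.mod_lt _ (hℓpos i)⟩⟩ := by
            rw [ACcardAux.pow_mod_cycle _ _ _ (hℓpos i) (hpow i) j]
          have h6 := hfE ⟨i, ⟨j % ℓ i, Nat.mod_lt _ (hℓpos i)⟩⟩
          have h7 : F ⟨i, ⟨j % ℓ i, Nat.mod_lt _ (hℓpos i)⟩⟩ = q - 1 := by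
            simp only [hFdef]
            exact dif_neg hi

          rw [hz', h6, h7]
      have hΦx : Φf f = x := by
        funext i
        obtain ⟨i, hi⟩ := i
        simp only [hΦdef]
        rw [hNfx i hi]
        exact ZMod.natCast_rightInverse _
      exact ⟨⟨f, hiff, by rw [hsigma f hiff, hΦx]; exact hx⟩, Subtype.ext hΦx⟩
  have hrange : φ.range = AddSubgroup.zmultiples ((Nat.gcd n (I.gcd s) : ℕ) : ZMod n) := by
    apply le_antisymm
    · rintro y ⟨x, rfl⟩
      show ∑ i : {x // x ∈ I}, ψ i.1 (x i) ∈ _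
      apply AddSubgroup.sum_mem
      intro i _
      have h1 : ψ i.1 (x i) = (((x i).val : ℕ) : ZMod n) * (s i.1 : ZMod n) := by
        conv_lhs => rw [show x i = (((x i).val : ℕ) : ZMod (M i.1)) from
          (ZMod.natCast_rightInverse _).symm]
        exact hψspec i.1 (x i).val
      rw [h1]
      obtain ⟨t, ht⟩ : Nat.gcd n (I.gcd s) ∣ s i.1 :=
        (Nat.gcd_dvd_right _ _).trans (Finset.gcd_dvd i.2)
      rw [AddSubgroup.mem_zmultiples_iff]
      refine ⟨((x i).val * t : ℕ), ?_⟩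
      rw [zsmul_eq_mul]
      push_cast [ht]
      ring
    · have hg : ((Nat.gcd n (I.gcd s) : ℕ) : ZMod n) ∈ φ.range := by
        have hsmem : ∀ i ∈ I, ((s i : ℕ) : ZMod n) ∈ φ.range := by
          intro i hi
          refine ⟨Pi.single ⟨i, hi⟩ 1, ?_⟩
          have h10 := ACcardAux.pi_single_sum (fun i' : {x // x ∈ I} => ψ i'.1)
            (⟨i, hi⟩ : {x // x ∈ I}) (1 : ZMod (M i))
          calc φ (Pi.single ⟨i, hi⟩ 1)
              = ∑ i' : {x // x ∈ I}, ψ i'.1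
                  ((Pi.single (⟨i, hi⟩ : {x // x ∈ I}) (1 : ZMod (M i)) :
                    ∀ i' : {x // x ∈ I}, ZMod (M i'.1)) i') := rfl
            _ = ψ i 1 := h10
            _ = ((s i : ℕ) : ZMod n) := by simpa using hψspec i 1
        have hd : ((I.gcd s : ℕ) : ZMod n) ∈ φ.range :=
          ACcardAux.gcd_cast_mem _ I s hsmem
        have hn0 : ((n : ℕ) : ZMod n) ∈ φ.range := by
          simp only [ZMod.natCast_self]
          exact φ.range.zero_mem
        exact ACcardAux.gcd_cast_mem2 _ n _ hn0 hd
      intro y hy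
      rw [AddSubgroup.mem_zmultiples_iff] at hy
      obtain ⟨k, rfl⟩ := hy
      exact AddSubgroup.zsmul_mem _ hg k
  rw [hcard1]
  by_cases hc : c ∈ AddSubgroup.zmultiples ((Nat.gcd n (I.gcd s) : ℕ) : ZMod n)
  · rw [if_pos hc]
    have hc' : c ∈ φ.range := by rw [hrange]; exact hc
    obtain ⟨x0, hx0⟩ := hc'
    have e2 : {x : (∀ i : {x // x ∈ I}, ZMod (M i.1)) // φ x = c} ≃ φ.ker :=
      { toFun := fun p => ⟨p.1 - x0, by
          rw [AddMonoidHom.mem_ker, map_sub, p.2, hx0, sub_self]⟩,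
        invFun := fun p => ⟨p.1 + x0, by
          rw [map_add, hx0, AddMonoidHom.mem_ker.mp p.2, zero_add]⟩,
        left_inv := fun p => Subtype.ext (by simp),
        right_inv := fun p => Subtype.ext (by simp) }
    have hk : Nat.card {x : (∀ i : {x // x ∈ I}, ZMod (M i.1)) // φ x = c}
        = Nat.card φ.ker := Nat.card_congr e2
    have hD : Nat.card (∀ i : {x // x ∈ I}, ZMod (M i.1))
        = Nat.card ((∀ i : {x // x ∈ I}, ZMod (M i.1)) ⧸ φ.ker) * Nat.card φ.ker :=
      AddSubgroup.card_eq_card_quotient_mul_card_addSubgroup _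
    have hQ : Nat.card ((∀ i : {x // x ∈ I}, ZMod (M i.1)) ⧸ φ.ker) = Nat.card φ.range :=
      Nat.card_congr (QuotientAddGroup.quotientKerEquivRange φ).toEquiv
    have hR : Nat.card φ.range = n / Nat.gcd n (I.gcd s) := by
      rw [hrange, Nat.card_zmultiples, ZMod.addOrderOf_coe _ hn.ne']
      congr 1
      rw [← Nat.gcd_assoc, Nat.gcd_self]
    have hDval : Nat.card (∀ i : {x // x ∈ I}, ZMod (M i.1)) = ∏ i ∈ I, M i := by
      rw [Nat.card_pi, ← Finset.prod_coe_sort I M]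
      exact Finset.prod_congr rfl (fun i _ => Nat.card_zmod _)
    set g := Nat.gcd n (I.gcd s) with hgdef
    have hgdvd : g ∣ n := Nat.gcd_dvd_left _ _
    have hgpos : 0 < g := Nat.gcd_pos_of_pos_left _ hn
    have hkey : Nat.card φ.ker * (n / g) = ∏ i ∈ I, M i := by
      rw [← hDval, hD, hQ, hR]
      ring
    have hprod : ((∏ i ∈ I, M i : ℕ) : ℚ) = ∏ i ∈ I, ((q : ℚ) ^ ℓ i - 1) := by
      push_cast
      refine Finset.prod_congr rfl (fun i _ => ?_)
      have h2 : 1 ≤ q ^ ℓ i := Nat.one_le_pow _ _ hq1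
      simp only [hMdef]
      rw [Nat.cast_sub h2]
      push_cast
      ring
    have hnq : (n : ℚ) ≠ 0 := Nat.cast_ne_zero.mpr hn.ne'
    have hgq : (g : ℚ) ≠ 0 := Nat.cast_ne_zero.mpr hgpos.ne'
    have hdiv : ((n / g : ℕ) : ℚ) = (n : ℚ) / g := Nat.cast_div hgdvd hgq
    have h9 : (Nat.card φ.ker : ℚ) * ((n : ℚ) / g) = ∏ i ∈ I, ((q : ℚ) ^ ℓ i - 1) := by
      rw [← hdiv, ← hprod, ← Nat.cast_mul, hkey]
    rw [hk]
    rw [← h9]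
    field_simp
  · rw [if_neg hc]
    haveI : IsEmpty {x : (∀ i : {x // x ∈ I}, ZMod (M i.1)) // φ x = c} :=
      ⟨fun p => hc (hrange ▸ (⟨p.1, p.2⟩ : c ∈ φ.range))⟩
    rw [Nat.card_of_isEmpty]
    simp
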